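/- Let X and Y be Banach spaces. If both X and Y have property (M), then the pair (X,Y) has property (m). -/

import Mathlib

open Filter Topology

noncomputable def minMod {X Y : Type*} [NormedAddCommGroup X] [NormedSpace ℝ X]
    [NormedAddCommGroup Y] [NormedSpace ℝ Y] (T : X →L[ℝ] Y) : ℝ :=
  sInf {r : ℝ | ∃ x : X, ‖x‖ = 1 ∧ ‖T x‖ = r}

def WeaklyNull {X : Type*} [NormedAddCommGroup X] [NormedSpace ℝ X] (x : ℕ → X) : Prop :=
  ∀ f : X →L[ℝ] ℝ, Tendsto (fun n => f (x n)) atTop (𝓝 0)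

def AttainsMinMod {X Y : Type*} [NormedAddCommGroup X] [NormedSpace ℝ X]
    [NormedAddCommGroup Y] [NormedSpace ℝ Y] (T : X →L[ℝ] Y) : Prop :=
  ∃ x : X, ‖x‖ = 1 ∧ ‖T x‖ = minMod T

def PairPropM (X Y : Type*) [NormedAddCommGroup X] [NormedSpace ℝ X]
    [NormedAddCommGroup Y] [NormedSpace ℝ Y] : Prop :=
  ∀ T : X →L[ℝ] Y, 1 ≤ minMod T →
    ∀ (x : X) (y : Y), ‖x‖ ≤ ‖y‖ → ∀ xs : ℕ → X, WeaklyNull xs →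
      limsup (fun n => ‖x + xs n‖) atTop ≤ limsup (fun n => ‖y + T (xs n)‖) atTop

def PairPropO (X Y : Type*) [NormedAddCommGroup X] [NormedSpace ℝ X]
    [NormedAddCommGroup Y] [NormedSpace ℝ Y] : Prop :=
  ∀ T : X →L[ℝ] Y, 1 ≤ minMod T →
    ∀ y : Y, y ≠ 0 → ∀ xs : ℕ → X, WeaklyNull xs →
      limsup (fun n => ‖xs n‖) atTop < limsup (fun n => ‖y + T (xs n)‖) atTop

def PropertyM (X : Type*) [NormedAddCommGroup X] [NormedSpace ℝ X] : Prop :=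
  ∀ x y : X, ‖y‖ ≤ ‖x‖ → ∀ xs : ℕ → X, WeaklyNull xs →
    limsup (fun n => ‖y + xs n‖) atTop ≤ limsup (fun n => ‖x + xs n‖) atTop

def OpialProperty (X : Type*) [NormedAddCommGroup X] [NormedSpace ℝ X] : Prop :=
  ∀ x : X, x ≠ 0 → ∀ xs : ℕ → X, WeaklyNull xs →
    limsup (fun n => ‖xs n‖) atTop < limsup (fun n => ‖x + xs n‖) atTop

def WeakMinimizingProperty (X Y : Type*) [NormedAddCommGroup X] [NormedSpace ℝ X]
    [NormedAddCommGroup Y] [NormedSpace ℝ Y] : Prop :=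
  ∀ T : X →L[ℝ] Y,
    (∃ xs : ℕ → X, (∀ n, ‖xs n‖ = 1) ∧
      Tendsto (fun n => ‖T (xs n)‖) atTop (𝓝 (minMod T)) ∧ ¬ WeaklyNull xs) →
    AttainsMinMod T

section Aux

open NormedSpace

lemma weaklyNull_bounded' {X : Type*} [NormedAddCommGroup X] [NormedSpace ℝ X]
    {xs : ℕ → X} (h : ∀ f : X →L[ℝ] ℝ, Tendsto (fun n => f (xs n)) atTop (𝓝 0)) :
    ∃ C : ℝ, 0 ≤ C ∧ ∀ n, ‖xs n‖ ≤ C := by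
  set g : ℕ → (StrongDual ℝ X) →L[ℝ] ℝ := fun n => inclusionInDoubleDual ℝ X (xs n) with hg
  have hb : ∀ f : StrongDual ℝ X, ∃ C, ∀ n, ‖g n f‖ ≤ C := by
    intro f
    have h1 : Tendsto (fun n => ‖f (xs n)‖) atTop (𝓝 ‖(0:ℝ)‖) := (h f).norm
    obtain ⟨C, hC⟩ := h1.bddAbove_range
    exact ⟨C, fun n => hC ⟨n, rfl⟩⟩
  obtain ⟨C, hC⟩ := banach_steinhaus hb
  refine ⟨max C 0, le_max_right _ _, fun n => ?_⟩
  have : ‖xs n‖ = ‖g n‖ := ((inclusionInDoubleDualLi ℝ).norm_map (xs n)).symm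
  rw [this]
  exact (hC n).trans (le_max_left _ _)

end Aux

set_option maxHeartbeats 1600000 in
theorem stmt4 {X Y : Type*} [NormedAddCommGroup X] [NormedSpace ℝ X] [CompleteSpace X]
    [NormedAddCommGroup Y] [NormedSpace ℝ Y] [CompleteSpace Y]
    (hX : PropertyM X) (hY : PropertyM Y) : PairPropM X Y := by
  intro T hT x y hxy xs hxs
  obtain ⟨C, hC0, hC⟩ := weaklyNull_bounded' hxs
  set S : Set ℝ := {r : ℝ | ∃ u : X, ‖u‖ = 1 ∧ ‖T u‖ = r} with hSdef
  have hmm0 : minMod T = sInf S := rfl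
  have hSbdd : BddBelow S := ⟨0, by rintro r ⟨u, -, rfl⟩; exact norm_nonneg _⟩
  have hSne : S.Nonempty := by
    by_contra h
    rw [Set.not_nonempty_iff_eq_empty] at h
    rw [hmm0, h, Real.sInf_empty] at hT
    linarith
  obtain ⟨m, hmdef⟩ : ∃ m : ℝ, m = minMod T := ⟨_, rfl⟩
  have hmm : m = sInf S := hmdef.trans hmm0
  have hm1 : (1 : ℝ) ≤ m := hmdef ▸ hT
  have hm0 : (0 : ℝ) < m := lt_of_lt_of_le one_pos hm1
  have hTz : ∀ z : X, m * ‖z‖ ≤ ‖T z‖ := by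
    intro z
    rcases eq_or_ne z 0 with rfl | hz
    · simp
    · have hzn : (0:ℝ) < ‖z‖ := norm_pos_iff.2 hz
      have hu : ‖(‖z‖⁻¹ • z : X)‖ = 1 := by
        rw [norm_smul, norm_inv, norm_norm]
        field_simp
      have hmem : ‖T (‖z‖⁻¹ • z)‖ ∈ S := ⟨_, hu, rfl⟩
      have hle : m ≤ ‖T (‖z‖⁻¹ • z)‖ := hmm ▸ csInf_le hSbdd hmem
      rw [map_smul, norm_smul, norm_inv, norm_norm] at hle
      calc m * ‖z‖ ≤ (‖z‖⁻¹ * ‖T z‖) * ‖z‖ := by nlinarith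
        _ = ‖T z‖ := by field_simp
  have hTb : ∀ n, ‖T (xs n)‖ ≤ ‖T‖ * C := fun n =>
    (T.le_opNorm _).trans (mul_le_mul_of_nonneg_left (hC n) (norm_nonneg T))
  rcases eq_or_ne y 0 with rfl | hy
  · have hx0 : x = 0 := norm_le_zero_iff.mp (by simpa using hxy)
    subst hx0
    simp only [zero_add]
    refine limsup_le_limsup (Eventually.of_forall fun n => ?_)
      (isCoboundedUnder_le_of_le atTop fun n => norm_nonneg _)
      (isBoundedUnder_of ⟨‖T‖ * C, hTb⟩)
    have := hTz (xs n)
    nlinarith [norm_nonneg (xs n)]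
  · obtain ⟨g, hg1, hgy⟩ := exists_dual_vector ℝ y (norm_ne_zero_iff.2 hy)
    obtain ⟨L, hLdef⟩ : ∃ L : ℝ, L = limsup (fun n => ‖y + T (xs n)‖) atTop := ⟨_, rfl⟩
    rw [← hLdef]
    have hLbdd : IsBoundedUnder (· ≤ ·) atTop (fun n => ‖y + T (xs n)‖) :=
      isBoundedUnder_of ⟨‖y‖ + ‖T‖ * C, fun n =>
        (norm_add_le _ _).trans (add_le_add_right (hTb n) _)⟩
    have hyL : ‖y‖ ≤ L := by
      have h2 : Tendsto (fun n => g (T (xs n))) atTop (𝓝 0) := hxs (g.comp T)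
      have h1 : Tendsto (fun n => g (y + T (xs n))) atTop (𝓝 ‖y‖) := by
        have := h2.const_add (g y)
        simpa [map_add, hgy] using this
      have h3 : limsup (fun n => g (y + T (xs n))) atTop = ‖y‖ := h1.limsup_eq
      rw [← h3, hLdef]
      refine limsup_le_limsup (Eventually.of_forall fun n => ?_)
        (h1.isBoundedUnder_ge.isCoboundedUnder_le) hLbdd
      calc g (y + T (xs n)) ≤ ‖g (y + T (xs n))‖ := le_abs_self _
        _ ≤ ‖g‖ * ‖y + T (xs n)‖ := g.le_opNorm _
        _ = ‖y + T (xs n)‖ := by rw [hg1, one_mul]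
    refine le_of_forall_pos_le_add fun ε hε => ?_
    obtain ⟨ε', hε'def⟩ : ∃ e : ℝ, e = ε / (2 * (‖y‖ + 1)) := ⟨_, rfl⟩
    have hy0 : (0:ℝ) < ‖y‖ := norm_pos_iff.2 hy
    have hε'0 : 0 < ε' := by rw [hε'def]; positivity
    have hε'y : ε' * (‖y‖ + 1) = ε / 2 := by
      rw [hε'def]; field_simp
    obtain ⟨r, ⟨u, hu1, hur⟩, hrlt⟩ :=
      exists_lt_of_csInf_lt hSne (show sInf S < m + ε' by rw [← hmm]; linarith)
    have hTu : ‖T u‖ ≤ m + ε' := by rw [hur]; linarith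
    obtain ⟨a, hadef⟩ : ∃ a : ℝ, a = m⁻¹ := ⟨_, rfl⟩
    have ha0 : (0:ℝ) < a := hadef ▸ inv_pos.2 hm0
    have ham : a * m = 1 := by rw [hadef]; exact inv_mul_cancel₀ (ne_of_gt hm0)
    have ha1 : a ≤ 1 := by nlinarith
    obtain ⟨x', hx'def⟩ : ∃ v : X, v = ‖x‖ • u := ⟨_, rfl⟩
    have hx'n : ‖x'‖ = ‖x‖ := by rw [hx'def, norm_smul, norm_norm, hu1, mul_one]
    obtain ⟨w, hwdef⟩ : ∃ w : Y, w = a • T x' := ⟨_, rfl⟩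
    obtain ⟨zs, hzsdef⟩ : ∃ zs : ℕ → Y, zs = fun n => a • T (xs n) := ⟨_, rfl⟩
    have hzs : WeaklyNull zs := by
      intro f
      have := (hxs (f.comp T)).const_mul a
      simpa [hzsdef, map_smul, smul_eq_mul, mul_comm] using this
    have s1 : limsup (fun n => ‖x + xs n‖) atTop ≤ limsup (fun n => ‖x' + xs n‖) atTop :=
      hX x' x (le_of_eq hx'n.symm) xs hxs
    have s2p : ∀ n, ‖x' + xs n‖ ≤ ‖w + zs n‖ := by
      intro n
      have h1 := hTz (x' + xs n)
      have h2 : w + zs n = a • T (x' + xs n) := by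
        rw [hwdef, hzsdef, map_add, smul_add]
      rw [h2, norm_smul, Real.norm_eq_abs, abs_of_pos ha0]
      nlinarith [norm_nonneg (T (x' + xs n)), mul_le_mul_of_nonneg_left h1 ha0.le]
    have hwb : ∀ n, ‖w + zs n‖ ≤ ‖w‖ + ‖T‖ * C := by
      intro n
      refine (norm_add_le _ _).trans (add_le_add_right ?_ _)
      rw [hzsdef]
      calc ‖a • T (xs n)‖ = a * ‖T (xs n)‖ := by
            rw [norm_smul, Real.norm_eq_abs, abs_of_pos ha0]
        _ ≤ 1 * (‖T‖ * C) := by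
            have := hTb n
            have h0 : (0:ℝ) ≤ ‖T (xs n)‖ := norm_nonneg _
            nlinarith
        _ = ‖T‖ * C := one_mul _
    have s2 : limsup (fun n => ‖x' + xs n‖) atTop ≤ limsup (fun n => ‖w + zs n‖) atTop :=
      limsup_le_limsup (Eventually.of_forall s2p)
        (isCoboundedUnder_le_of_le atTop fun n => norm_nonneg _)
        (isBoundedUnder_of ⟨‖w‖ + ‖T‖ * C, hwb⟩)
    obtain ⟨c, hcdef⟩ : ∃ c : ℝ, c = 1 + ε' := ⟨_, rfl⟩
    have hc1 : 1 ≤ c := by rw [hcdef]; linarith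
    have hwn : ‖w‖ ≤ ‖c • y‖ := by
      have hw : ‖w‖ = a * (‖x‖ * ‖T u‖) := by
        rw [hwdef, hx'def, map_smul, norm_smul, norm_smul, Real.norm_eq_abs,
          abs_of_pos ha0, norm_norm]
      have hcy : ‖c • y‖ = c * ‖y‖ := by
        rw [norm_smul, Real.norm_eq_abs, abs_of_pos (by linarith : (0:ℝ) < c)]
      rw [hw, hcy]
      have hx0 : (0:ℝ) ≤ ‖x‖ := norm_nonneg x
      have step1 : a * (‖x‖ * ‖T u‖) ≤ a * (‖x‖ * (m + ε')) :=
        mul_le_mul_of_nonneg_left (mul_le_mul_of_nonneg_left hTu hx0) ha0.le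
      have step2 : a * (‖x‖ * (m + ε')) = ‖x‖ * (a * m) + ‖x‖ * (a * ε') := by ring
      have step2' : a * (‖x‖ * (m + ε')) = ‖x‖ + ‖x‖ * (a * ε') := by rw [step2, ham, mul_one]
      have haε : a * ε' ≤ ε' := mul_le_of_le_one_left hε'0.le ha1
      have step3 : ‖x‖ * (a * ε') ≤ ‖x‖ * ε' := mul_le_mul_of_nonneg_left haε hx0
      have step4 : ‖x‖ * ε' ≤ ‖y‖ * ε' := mul_le_mul_of_nonneg_right hxy hε'0.le
      have step5 : c * ‖y‖ = ‖y‖ + ‖y‖ * ε' := by rw [hcdef]; ring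
      linarith
    have s3 : limsup (fun n => ‖w + zs n‖) atTop ≤ limsup (fun n => ‖c • y + zs n‖) atTop :=
      hY (c • y) w hwn zs hzs
    have hev : ∀ᶠ n in atTop, ‖y + T (xs n)‖ < L + ε / 2 := by
      refine eventually_lt_of_limsup_lt ?_ hLbdd
      rw [← hLdef]; linarith
    have s4 : limsup (fun n => ‖c • y + zs n‖) atTop ≤ L + ε := by
      refine limsup_le_of_le (isCoboundedUnder_le_of_le atTop fun n => norm_nonneg _) ?_
      filter_upwards [hev] with n hn
      have hdecomp : c • y + zs n = a • (y + T (xs n)) + (c - a) • y := by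
        rw [hzsdef, smul_add, sub_smul]
        abel
      rw [hdecomp]
      have hca : (0:ℝ) ≤ c - a := by linarith
      have h5 : ‖a • (y + T (xs n)) + (c - a) • y‖ ≤ a * ‖y + T (xs n)‖ + (c - a) * ‖y‖ := by
        refine (norm_add_le _ _).trans ?_
        rw [norm_smul, norm_smul, Real.norm_eq_abs, Real.norm_eq_abs,
          abs_of_pos ha0, abs_of_nonneg hca]
      have h6 : a * ‖y + T (xs n)‖ ≤ a * (L + ε / 2) :=
        mul_le_mul_of_nonneg_left hn.le ha0.le
      have hL0 : (0:ℝ) ≤ L := le_trans hy0.le hyL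
      have h7 : (1 - a) * ‖y‖ ≤ (1 - a) * L :=
        mul_le_mul_of_nonneg_left hyL (by linarith : (0:ℝ) ≤ 1 - a)
      have h9a : ε' * (‖y‖ + 1) = ε' * ‖y‖ + ε' := by ring
      have h9 : ε' * ‖y‖ = ε / 2 - ε' := by linarith
      have h10 : a * (L + ε / 2) = a * L + a * (ε / 2) := by ring
      have h11 : a * (ε / 2) ≤ ε / 2 := mul_le_of_le_one_left (by linarith) ha1
      have h12 : a * L + (1 - a) * L = L := by ring
      have h13 : (c - a) * ‖y‖ = (1 - a) * ‖y‖ + ε' * ‖y‖ := by rw [hcdef]; ring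
      linarith
    linarith
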